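/- Any realizable parity configuration on three terminals has at most 6 bad pairs in total. -/

import Mathlib

/-- `l` is a simple directed path along the edge relation `E` from `a` to `b`. -/
def IsDipathFrom {V : Type*} (E : V → V → Prop) (l : List V) (a b : V) : Prop :=
  l.Nodup ∧ l.Chain' E ∧ l.head? = some a ∧ l.getLast? = some b

/-- The length (number of edges) of a path given as its list of vertices. -/
def pathLen {V : Type*} (l : List V) : ℕ := l.length - 1

/-- `p ∈ Dir(a, b)` (w.r.t. the third terminal `c`): there is a simple directed path of
parity `p` from `a` to `b` avoiding `c`. -/
def HasDir {V : Type*} (E : V → V → Prop) (a b c : V) (p : ℕ) : Prop :=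
  ∃ l : List V, IsDipathFrom E l a b ∧ c ∉ l ∧ pathLen l % 2 = p

/-- `p ∈ Via(a, m, b)`: there is a simple path of parity `p` from `a` to `b` through `m`,
and no simple path of parity `p` from `a` to `b` avoids `m`. -/
def HasVia {V : Type*} (E : V → V → Prop) (a m b : V) (p : ℕ) : Prop :=
  (∃ l : List V, IsDipathFrom E l a b ∧ m ∈ l ∧ pathLen l % 2 = p) ∧ ¬ HasDir E a b m p

/-- `(x, y)` is a bad pair between `Dir(v i, v j)` and `Dir(v j, v k)`. -/
def BadPair {V : Type*} (E : V → V → Prop) (v : Fin 3 → V) (i j k : Fin 3) (x y : ℕ) : Prop :=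
  HasDir E (v i) (v j) (v k) x ∧ HasDir E (v j) (v k) (v i) y ∧
    ¬ (HasDir E (v i) (v k) (v j) ((x + y) % 2) ∨ HasVia E (v i) (v j) (v k) ((x + y) % 2))

lemma myGetLast?_append {α : Type*} (l₁ l₂ : List α) (h : l₂ ≠ []) :
    (l₁ ++ l₂).getLast? = l₂.getLast? := by
  induction l₁ with
  | nil => rfl
  | cons a l ih =>
    rw [List.cons_append, ← ih]
    cases hl : l ++ l₂ with
    | nil => exact absurd (List.append_eq_nil_iff.1 hl).2 h
    | cons b t => rw [List.getLast?_cons_cons]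

/-- Splicing a simple path `a → b` with a simple path `b → c` gives a simple path `a → c`
using only vertices of the two paths. -/
lemma splice {V : Type*} (E : V → V → Prop) {b c : V} (Q : List V)
    (hQ : IsDipathFrom E Q b c) :
    ∀ (P : List V) (a : V), IsDipathFrom E P a b →
      ∃ R, IsDipathFrom E R a c ∧ ∀ x ∈ R, x ∈ P ∨ x ∈ Q := by
  classical
  intro P
  induction P with
  | nil => intro a hP; exact absurd hP.2.2.1 (by simp)
  | cons p P' IH =>
    intro a hP
    obtain ⟨hnd, hch, hhd, hlast⟩ := hP
    have ha : p = a := by simpa using hhd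
    subst ha
    by_cases hmem : p ∈ Q
    · obtain ⟨Q₁, Q₂, hQeq⟩ := List.append_of_mem hmem
      have hsuf : (p :: Q₂) <:+ Q := ⟨Q₁, hQeq.symm⟩
      refine ⟨p :: Q₂, ⟨hQ.1.sublist hsuf.sublist, hQ.2.1.suffix hsuf, rfl, ?_⟩,
        fun x hx => Or.inr (hsuf.subset hx)⟩
      have hc := hQ.2.2.2
      rw [hQeq, myGetLast?_append Q₁ (p :: Q₂) (by simp)] at hc
      exact hc
    · have hbQ : b ∈ Q := List.mem_of_mem_head? (by rw [hQ.2.2.1]; rfl)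
      have hpb : p ≠ b := fun h => hmem (h ▸ hbQ)
      cases P' with
      | nil => simp [List.getLast?] at hlast; exact absurd hlast hpb
      | cons q t =>
        rw [List.Chain', List.isChain_cons_cons] at hch
        rw [List.getLast?_cons_cons] at hlast
        have hP' : IsDipathFrom E (q :: t) q b := ⟨hnd.of_cons, hch.2, rfl, hlast⟩
        obtain ⟨R, hR, hcov⟩ := IH q hP'
        have hpR : p ∉ R := fun hx => by
          rcases hcov _ hx with h | h
          · exact (List.nodup_cons.1 hnd).1 h
          · exact hmem h
        have hRne : R ≠ [] := by
          intro h; rw [h] at hR; simp [IsDipathFrom] at hR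
        refine ⟨p :: R, ⟨List.nodup_cons.2 ⟨hpR, hR.1⟩, ?_, rfl, ?_⟩, ?_⟩
        · rw [List.Chain', List.isChain_cons]
          refine ⟨fun y hy => ?_, hR.2.1⟩
          have hyq : q = y := by
            rw [hR.2.2.1] at hy; simpa using hy
          exact hyq ▸ hch.1
        · rw [show p :: R = [p] ++ R from rfl, myGetLast?_append [p] R hRne]
          exact hR.2.2.2
        · intro x hx
          rcases List.mem_cons.1 hx with rfl | hx
          · exact Or.inl (List.mem_cons_self)
          · rcases hcov x hx with h | h
            · exact Or.inl (List.mem_cons_of_mem _ h)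
            · exact Or.inr h

/-- All bad pairs between a fixed pair of Dir sets have the same parity sum. -/
lemma badpair_sum_eq {V : Type*} {E : V → V → Prop} {v : Fin 3 → V} {i j k : Fin 3}
    {x y x' y' : ℕ} (h : BadPair E v i j k x y) (h' : BadPair E v i j k x' y') :
    (x + y) % 2 = (x' + y') % 2 := by
  by_contra hne
  obtain ⟨hd1, hd2, hneg⟩ := h
  obtain ⟨-, -, hneg'⟩ := h'
  obtain ⟨P, hP, -, -⟩ := hd1
  obtain ⟨Q, hQ, -, -⟩ := hd2
  obtain ⟨R, hR, -⟩ := splice E Q hQ P (v i) hP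
  set p := pathLen R % 2 with hp
  have hcontr : ¬ (HasDir E (v i) (v k) (v j) p ∨ HasVia E (v i) (v j) (v k) p) := by
    have hor : p = (x + y) % 2 ∨ p = (x' + y') % 2 := by omega
    rcases hor with h1 | h1 <;> rw [h1] <;> assumption
  by_cases hjR : v j ∈ R
  · exact hcontr (Or.inr ⟨⟨R, hR, hjR, rfl⟩, fun hd => hcontr (Or.inl hd)⟩)
  · exact hcontr (Or.inl ⟨R, hR, hjR, rfl⟩)

/-- The set of bad pairs between `Dir(v i, v j)` and `Dir(v j, v k)`. -/
def Bset {V : Type*} (E : V → V → Prop) (v : Fin 3 → V) (i j k : Fin 3) : Set (ℕ × ℕ) :=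
  {q : ℕ × ℕ | q.1 < 2 ∧ q.2 < 2 ∧ BadPair E v i j k q.1 q.2}

lemma Bset_encard_le {V : Type*} (E : V → V → Prop) (v : Fin 3 → V) (i j k : Fin 3) :
    (Bset E v i j k).encard ≤ 2 := by
  rcases Set.eq_empty_or_nonempty (Bset E v i j k) with h | ⟨⟨x₀, y₀⟩, h₀⟩
  · simp [h]
  · have hsub : Bset E v i j k ⊆ {(0, (x₀ + y₀) % 2), (1, (x₀ + y₀ + 1) % 2)} := by
      rintro ⟨x, y⟩ hxy
      have hs := badpair_sum_eq hxy.2.2 h₀.2.2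
      obtain ⟨hx, hy, -⟩ := hxy
      obtain ⟨hx₀, hy₀, -⟩ := h₀
      simp only [Set.mem_insert_iff, Set.mem_singleton_iff, Prod.mk.injEq]
      omega
    refine (Set.encard_mono hsub).trans ?_
    refine (Set.encard_insert_le _ _).trans ?_
    simp [Set.encard_singleton]
    norm_num

lemma Bset_kill {V : Type*} (E : V → V → Prop) (v : Fin 3 → V) (i j k : Fin 3)
    (h : 1 < (Bset E v i j k).encard) : Bset E v i k j = ∅ := by
  obtain ⟨q, q', hq, hq', hne⟩ := Set.one_lt_encard_iff.1 h
  obtain ⟨hx, hy, hbp⟩ := hq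
  obtain ⟨hx', hy', hbp'⟩ := hq'
  have hs := badpair_sum_eq hbp hbp'
  have hfst : q.1 ≠ q'.1 := by
    intro hfe
    apply hne
    have h2 : q.2 = q'.2 := by omega
    exact Prod.ext hfe h2
  have hd : ∀ p, p < 2 → HasDir E (v i) (v j) (v k) p := by
    intro p hp
    have hor : p = q.1 ∨ p = q'.1 := by omega
    rcases hor with rfl | rfl
    · exact hbp.1
    · exact hbp'.1
  ext ⟨x, y⟩
  simp only [Bset, Set.mem_setOf_eq, Set.mem_empty_iff_false, iff_false, not_and]
  intro hx2 hy2 hbpc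
  exact hbpc.2.2 (Or.inl (hd _ (Nat.mod_lt _ (by norm_num))))

lemma Bset_pair_le {V : Type*} (E : V → V → Prop) (v : Fin 3 → V) (i j k : Fin 3) :
    (Bset E v i j k).encard + (Bset E v i k j).encard ≤ 2 := by
  by_cases h1 : 1 < (Bset E v i j k).encard
  · rw [Bset_kill E v i j k h1]
    simpa using Bset_encard_le E v i j k
  · by_cases h2 : 1 < (Bset E v i k j).encard
    · rw [Bset_kill E v i k j h2]
      simpa using Bset_encard_le E v i k j
    · push_neg at h1 h2
      calc (Bset E v i j k).encard + (Bset E v i k j).encard ≤ (1 : ℕ∞) + 1 :=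
            add_le_add h1 h2
        _ = 2 := by norm_num

/-- Any realizable parity configuration on three terminals (one arising from an actual
directed graph `E` with distinct terminals `v 0, v 1, v 2`) has at most 6 bad pairs in
total, summed over all six ordered triples of distinct terminals. -/
theorem stmt_9 {V : Type*} (E : V → V → Prop) (v : Fin 3 → V) (hv : Function.Injective v) :
    ∑ r ∈ Finset.univ.filter
        (fun r : Fin 3 × Fin 3 × Fin 3 => r.1 ≠ r.2.1 ∧ r.2.1 ≠ r.2.2 ∧ r.1 ≠ r.2.2),
      {q : ℕ × ℕ | q.1 < 2 ∧ q.2 < 2 ∧ BadPair E v r.1 r.2.1 r.2.2 q.1 q.2}.encard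
      ≤ (6 : ℕ∞) := by
  classical
  have hfilter : (Finset.univ.filter
        (fun r : Fin 3 × Fin 3 × Fin 3 => r.1 ≠ r.2.1 ∧ r.2.1 ≠ r.2.2 ∧ r.1 ≠ r.2.2))
      = ({(0,1,2), (0,2,1), (2,0,1), (2,1,0), (1,2,0), (1,0,2)} :
          Finset (Fin 3 × Fin 3 × Fin 3)) := by decide
  rw [hfilter]
  rw [Finset.sum_insert (by decide), Finset.sum_insert (by decide),
    Finset.sum_insert (by decide), Finset.sum_insert (by decide),
    Finset.sum_insert (by decide), Finset.sum_singleton]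
  show (Bset E v 0 1 2).encard + ((Bset E v 0 2 1).encard + ((Bset E v 2 0 1).encard +
      ((Bset E v 2 1 0).encard + ((Bset E v 1 2 0).encard + (Bset E v 1 0 2).encard)))) ≤ 6
  calc (Bset E v 0 1 2).encard + ((Bset E v 0 2 1).encard + ((Bset E v 2 0 1).encard +
      ((Bset E v 2 1 0).encard + ((Bset E v 1 2 0).encard + (Bset E v 1 0 2).encard))))
      = ((Bset E v 0 1 2).encard + (Bset E v 0 2 1).encard) +
        (((Bset E v 2 0 1).encard + (Bset E v 2 1 0).encard) +
         ((Bset E v 1 2 0).encard + (Bset E v 1 0 2).encard)) := by ring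
    _ ≤ 2 + (2 + 2) :=
        add_le_add (Bset_pair_le E v 0 1 2)
          (add_le_add (Bset_pair_le E v 2 0 1) (Bset_pair_le E v 1 2 0))
    _ = 6 := by norm_num
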